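/- Let $d>1$, let $R_+=R_+^1\cup R_+^2$ where $R_+^1=\{e_i-e_j:1\le i<j\le d\}\cup\{e_i+e_j:1\le i<j\le d\}$ and $R_+^2=\{e_i:1\le i\le d\}$ (the positive root system of type $B_d$), and let $k_1,k_2>0$ with $k(\alpha)=k_1$ for $\alpha\in R_+^1$ and $k(\alpha)=k_2$ for $\alpha\in R_+^2$. Then for every $x\in\mathbb{R}^d$ with $x_1>x_2>\cdots>x_d>0$ it holds that $\sum_{\alpha\in R_+}\frac{k(\alpha)|\alpha|^2}{\langle\alpha,x\rangle^2}=\sum_{\alpha\in R_+}\sum_{\beta\in R_+}\frac{k(\beta)\langle\alpha,\beta\rangle}{\langle\alpha,x\rangle\langle\beta,x\rangle}$. -/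

import Mathlib

open scoped RealInnerProductSpace

open Finset in
lemma pair_split' {ι : Type*} [Fintype ι] [LinearOrder ι] (F : ι → ι → ℝ) :
    ∑ i, ∑ j, F i j =
      (∑ p ∈ univ.filter (fun p : ι × ι => p.1 < p.2), (F p.1 p.2 + F p.2 p.1)) + ∑ i, F i i := by
  have h0 : ∑ i, ∑ j, F i j = ∑ p ∈ (univ : Finset (ι × ι)), F p.1 p.2 := by
    rw [← Finset.univ_product_univ, Finset.sum_product]
  have hswap : ∑ p ∈ univ.filter (fun p : ι × ι => p.2 < p.1), F p.1 p.2
      = ∑ p ∈ univ.filter (fun p : ι × ι => p.1 < p.2), F p.2 p.1 := by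
    refine Finset.sum_nbij' (i := fun p : ι × ι => p.swap) (j := fun p : ι × ι => p.swap)
      ?_ ?_ ?_ ?_ ?_ <;> simp +contextual
  have hdiag : ∑ p ∈ univ.filter (fun p : ι × ι => ¬ p.1 < p.2 ∧ ¬ p.2 < p.1), F p.1 p.2
      = ∑ i, F i i := by
    refine Finset.sum_nbij' (i := fun p : ι × ι => p.1) (j := fun i : ι => (i, i))
      ?_ ?_ ?_ ?_ ?_
    · simp
    · simp
    · intro p hp
      simp only [mem_filter, mem_univ, true_and, not_lt] at hp
      have h2 : p.2 = p.1 := le_antisymm hp.1 hp.2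
      have : p = (p.1, p.1) := by rw [Prod.ext_iff]; exact ⟨rfl, h2⟩
      exact this.symm
    · intro i _; rfl
    · intro p hp
      simp only [mem_filter, mem_univ, true_and, not_lt] at hp
      have h2 : p.2 = p.1 := le_antisymm hp.1 hp.2
      rw [h2]
  have hsplit2 : ∑ p ∈ univ.filter (fun p : ι × ι => ¬ p.1 < p.2), F p.1 p.2
      = ∑ p ∈ univ.filter (fun p : ι × ι => p.2 < p.1), F p.1 p.2
        + ∑ p ∈ univ.filter (fun p : ι × ι => ¬ p.1 < p.2 ∧ ¬ p.2 < p.1), F p.1 p.2 := by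
    rw [← Finset.sum_filter_add_sum_filter_not
      (univ.filter (fun p : ι × ι => ¬ p.1 < p.2)) (fun p => p.2 < p.1), Finset.filter_filter,
      Finset.filter_filter]
    congr 2
    ext p
    simp only [mem_filter, mem_univ, true_and, and_iff_right_iff_imp]
    exact fun h => asymm h
  rw [h0, ← Finset.sum_filter_add_sum_filter_not (univ : Finset (ι × ι))
    (fun p => p.1 < p.2), Finset.sum_add_distrib, hsplit2, hswap, hdiag, add_assoc]
lemma lagrange3 (u v w : ℝ) :
    u / ((u - v) * (u - w)) + v / ((v - w) * (v - u)) + w / ((w - u) * (w - v)) =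
      (if v = w then u / (u - v) ^ 2 else 0) + (if u = v then w / (w - u) ^ 2 else 0)
        + (if w = u then v / (v - w) ^ 2 else 0) := by
  rcases eq_or_ne u v with huv | huv
  · subst huv
    rcases eq_or_ne u w with huw | huw
    · subst huw; simp [sub_self]
    · rw [if_neg huw, if_pos rfl, if_neg (fun h => huw h.symm)]
      simp only [sub_self, zero_mul, mul_zero, div_zero, zero_add, add_zero]
      rw [sq]
  · rcases eq_or_ne v w with hvw | hvw
    · subst hvw
      rw [if_pos rfl, if_neg huv, if_neg (fun h => huv h.symm)]
      simp only [sub_self, zero_mul, mul_zero, div_zero, zero_add, add_zero]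
      rw [sq]
    · rcases eq_or_ne w u with hwu | hwu
      · subst hwu
        rw [if_neg hvw, if_neg huv, if_pos rfl]
        simp only [sub_self, zero_mul, mul_zero, div_zero, zero_add, add_zero]
        rw [sq]
      · have h1 : u - v ≠ 0 := sub_ne_zero.mpr huv
        have h2 : v - w ≠ 0 := sub_ne_zero.mpr hvw
        have h3 : w - u ≠ 0 := sub_ne_zero.mpr hwu
        have h1' : v - u ≠ 0 := sub_ne_zero.mpr (Ne.symm huv)
        have h2' : w - v ≠ 0 := sub_ne_zero.mpr (Ne.symm hvw)
        have h3' : u - w ≠ 0 := sub_ne_zero.mpr (Ne.symm hwu)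
        rw [if_neg hvw, if_neg huv, if_neg hwu]
        field_simp
        ring
open Finset in
lemma antisym_sum {ι : Type*} [Fintype ι] (f : ι → ι → ℝ) (h : ∀ i j, f i j = - f j i) :
    ∑ i, ∑ j, f i j = 0 := by
  have h1 : ∑ i, ∑ j, f i j = ∑ j, ∑ i, f i j := Finset.sum_comm
  have h2 : ∑ j : ι, ∑ i : ι, f i j = - ∑ j : ι, ∑ i : ι, f j i := by
    rw [← Finset.sum_neg_distrib]
    refine Finset.sum_congr rfl fun j _ => ?_
    rw [← Finset.sum_neg_distrib]
    exact Finset.sum_congr rfl fun i _ => h i j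
  have h3 : ∑ j : ι, ∑ i : ι, f j i = ∑ i : ι, ∑ j : ι, f i j := rfl
  rw [h3] at h2
  linarith [h1.trans h2]
open Finset in
lemma core {ι : Type*} [Fintype ι] [LinearOrder ι] (x : ι → ℝ) (hx : ∀ i, 0 < x i)
    (hinj : ∀ i j : ι, i ≠ j → x i ≠ x j) (k1 k2 : ℝ) :
    ∑ i, ((∑ j, 2 * x i / (x i ^ 2 - x j ^ 2)) + (x i)⁻¹)
        * (k1 * (∑ j, 2 * x i / (x i ^ 2 - x j ^ 2)) + k2 * (x i)⁻¹)
      = ((∑ p ∈ univ.filter (fun p : ι × ι => p.1 < p.2), k1 * 2 / (x p.1 - x p.2) ^ 2)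
          + ∑ p ∈ univ.filter (fun p : ι × ι => p.1 < p.2), k1 * 2 / (x p.1 + x p.2) ^ 2)
        + ∑ i, k2 / x i ^ 2 := by
  set b : ι → ℝ := fun i => x i ^ 2 with hbdef
  have hb : ∀ i j : ι, i ≠ j → b i ≠ b j := by
    intro i j hij h
    have hsum : 0 < x i + x j := add_pos (hx i) (hx j)
    have hz : (x i - x j) * (x i + x j) = 0 := by linear_combination h
    rcases mul_eq_zero.mp hz with h' | h'
    · exact hinj i j hij (sub_eq_zero.mp h')
    · exact hsum.ne' h'
  set Q : ι → ℝ := fun i => ∑ j, 2 * x i / (b i - b j) with hQdef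
  -- Step A : ∑ Q i * (x i)⁻¹ = 0
  have hA : ∑ i, Q i * (x i)⁻¹ = 0 := by
    have h1 : ∑ i, Q i * (x i)⁻¹ = ∑ i, ∑ j, 2 / (b i - b j) := by
      refine Finset.sum_congr rfl fun i _ => ?_
      rw [hQdef, Finset.sum_mul]
      refine Finset.sum_congr rfl fun j _ => ?_
      rcases eq_or_ne (b i - b j) 0 with h | h
      · rw [h, div_zero, div_zero, zero_mul]
      · have hxi : x i ≠ 0 := (hx i).ne'
        field_simp
    rw [h1]
    refine antisym_sum _ fun i j => ?_
    rw [← neg_sub (b j) (b i), div_neg]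
  -- Step B : Lagrange, ∑ Q i ^ 2 = ∑ i, ∑ j, 4 * b i / (b i - b j) ^ 2
  have hB : ∑ i, Q i ^ 2 = ∑ i, ∑ j, 4 * b i / (b i - b j) ^ 2 := by
    set G : ι → ι → ι → ℝ := fun i j l => b i / ((b i - b j) * (b i - b l)) with hGdef
    set T : ℝ := ∑ i, ∑ j, ∑ l, G i j l with hTdef
    have perm1 : ∑ i, ∑ j, ∑ l, G j l i = T := by
      rw [hTdef, Finset.sum_comm]
      exact Finset.sum_congr rfl fun j _ => Finset.sum_comm
    have perm2 : ∑ i, ∑ j, ∑ l, G l i j = T := by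
      have h : ∑ i, ∑ j, ∑ l, G l i j = ∑ i, ∑ l, ∑ j, G l i j :=
        Finset.sum_congr rfl fun i _ => Finset.sum_comm
      rw [h, Finset.sum_comm, hTdef]
    have hlag : ∀ i j l : ι, G i j l + G j l i + G l i j =
        (if j = l then b i / (b i - b j) ^ 2 else 0)
          + (if i = j then b l / (b l - b i) ^ 2 else 0)
          + (if l = i then b j / (b j - b l) ^ 2 else 0) := by
      intro i j l
      have h := lagrange3 (b i) (b j) (b l)
      have e1 : (if b j = b l then b i / (b i - b j) ^ 2 else 0)
          = (if j = l then b i / (b i - b j) ^ 2 else 0) := by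
        rcases eq_or_ne j l with h' | h'
        · subst h'; rw [if_pos rfl, if_pos rfl]
        · rw [if_neg (hb j l h'), if_neg h']
      have e2 : (if b i = b j then b l / (b l - b i) ^ 2 else 0)
          = (if i = j then b l / (b l - b i) ^ 2 else 0) := by
        rcases eq_or_ne i j with h' | h'
        · subst h'; rw [if_pos rfl, if_pos rfl]
        · rw [if_neg (hb i j h'), if_neg h']
      have e3 : (if b l = b i then b j / (b j - b l) ^ 2 else 0)
          = (if l = i then b j / (b j - b l) ^ 2 else 0) := by
        rcases eq_or_ne l i with h' | h'
        · subst h'; rw [if_pos rfl, if_pos rfl]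
        · rw [if_neg (hb l i h'), if_neg h']
      rw [e1, e2, e3] at h
      exact h
    have hsum3 : T + T + T = ∑ i, ∑ j, ∑ l, (G i j l + G j l i + G l i j) := by
      simp only [Finset.sum_add_distrib]
      rw [perm1, perm2]
    have E1 : ∑ i : ι, ∑ j : ι, ∑ l : ι, (if j = l then b i / (b i - b j) ^ 2 else 0)
        = ∑ i : ι, ∑ j : ι, b i / (b i - b j) ^ 2 := by
      refine Finset.sum_congr rfl fun i _ => Finset.sum_congr rfl fun j _ => ?_
      simp
    have E2 : ∑ i : ι, ∑ j : ι, ∑ l : ι, (if i = j then b l / (b l - b i) ^ 2 else 0)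
        = ∑ i : ι, ∑ j : ι, b i / (b i - b j) ^ 2 := by
      have h1 : ∀ i j : ι, ∑ l : ι, (if i = j then b l / (b l - b i) ^ 2 else 0)
          = if i = j then ∑ l : ι, b l / (b l - b i) ^ 2 else 0 := by
        intro i j; split_ifs <;> simp
      have h2 : ∑ i : ι, ∑ j : ι, ∑ l : ι, (if i = j then b l / (b l - b i) ^ 2 else 0)
          = ∑ i : ι, ∑ l : ι, b l / (b l - b i) ^ 2 := by
        refine Finset.sum_congr rfl fun i _ => ?_
        rw [Finset.sum_congr rfl fun j _ => h1 i j]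
        simp
      rw [h2, Finset.sum_comm]
    have E3 : ∑ i : ι, ∑ j : ι, ∑ l : ι, (if l = i then b j / (b j - b l) ^ 2 else 0)
        = ∑ i : ι, ∑ j : ι, b i / (b i - b j) ^ 2 := by
      have h2 : ∑ i : ι, ∑ j : ι, ∑ l : ι, (if l = i then b j / (b j - b l) ^ 2 else 0)
          = ∑ i : ι, ∑ j : ι, b j / (b j - b i) ^ 2 := by
        refine Finset.sum_congr rfl fun i _ => Finset.sum_congr rfl fun j _ => ?_
        simp
      rw [h2, Finset.sum_comm]
    have hT : T = ∑ i, ∑ j, b i / (b i - b j) ^ 2 := by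
      have h := hsum3
      rw [Finset.sum_congr rfl fun i _ => Finset.sum_congr rfl fun j _ =>
        Finset.sum_congr rfl fun l _ => hlag i j l] at h
      simp only [Finset.sum_add_distrib] at h
      rw [E1, E2, E3] at h
      linarith
    have hQsq : ∑ i, Q i ^ 2 = ∑ i, ∑ j, ∑ l, 4 * G i j l := by
      refine Finset.sum_congr rfl fun i _ => ?_
      rw [hQdef, sq, Finset.sum_mul_sum]
      refine Finset.sum_congr rfl fun j _ => Finset.sum_congr rfl fun l _ => ?_
      show (2 * x i / (b i - b j)) * (2 * x i / (b i - b l)) = 4 * G i j l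
      rw [hGdef, div_mul_div_comm, ← mul_div_assoc]
      congr 1
      simp only [hbdef]
      ring
    rw [hQsq]
    simp only [← Finset.mul_sum]
    rw [← hTdef, hT, Finset.mul_sum]
    refine Finset.sum_congr rfl fun i _ => ?_
    rw [Finset.mul_sum]
    exact Finset.sum_congr rfl fun j _ => by ring
  -- Step C
  have hpoint : ∀ i j : ι, 4 * b i / (b i - b j) ^ 2
      = (2 * b i + 2 * b j) / (b i - b j) ^ 2 + 2 / (b i - b j) := by
    intro i j
    rcases eq_or_ne (b i) (b j) with h | h
    · rw [h, sub_self]; norm_num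
    · have hne : b i - b j ≠ 0 := sub_ne_zero.mpr h
      field_simp
      ring
  have hC : ∑ i, ∑ j, 4 * b i / (b i - b j) ^ 2
      = ∑ p ∈ univ.filter (fun p : ι × ι => p.1 < p.2),
          (2 / (x p.1 - x p.2) ^ 2 + 2 / (x p.1 + x p.2) ^ 2) := by
    have h1 : ∑ i, ∑ j, 4 * b i / (b i - b j) ^ 2
        = (∑ i, ∑ j, (2 * b i + 2 * b j) / (b i - b j) ^ 2) + ∑ i, ∑ j, 2 / (b i - b j) := by
      simp only [← Finset.sum_add_distrib]
      exact Finset.sum_congr rfl fun i _ => Finset.sum_congr rfl fun j _ => hpoint i j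
    have h2 : ∑ i : ι, ∑ j : ι, 2 / (b i - b j) = 0 := by
      refine antisym_sum _ fun i j => ?_
      rw [← neg_sub (b j) (b i), div_neg]
    have h3 := pair_split' (fun i j => (2 * b i + 2 * b j) / (b i - b j) ^ 2)
    have h4 : ∑ i : ι, (2 * b i + 2 * b i) / (b i - b i) ^ 2 = 0 := by
      simp [sub_self]
    rw [h1, h2, add_zero, h3, h4, add_zero]
    refine Finset.sum_congr rfl fun p hp => ?_
    have hp12 : p.1 ≠ p.2 := ne_of_lt (Finset.mem_filter.mp hp).2
    have hd : x p.1 - x p.2 ≠ 0 := sub_ne_zero.mpr (hinj _ _ hp12)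
    have hs : x p.1 + x p.2 ≠ 0 := (add_pos (hx p.1) (hx p.2)).ne'
    have h' : x p.1 ^ 2 - x p.2 ^ 2 ≠ 0 := by
      intro h0
      exact mul_ne_zero hd hs (by linear_combination h0)
    have h'' : x p.2 ^ 2 - x p.1 ^ 2 ≠ 0 := fun h0 => h' (by linear_combination -h0)
    simp only [hbdef]
    rw [div_add_div _ _ (pow_ne_zero 2 h') (pow_ne_zero 2 h''),
      div_add_div _ _ (pow_ne_zero 2 hd) (pow_ne_zero 2 hs),
      div_eq_div_iff (mul_ne_zero (pow_ne_zero 2 h') (pow_ne_zero 2 h''))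
        (mul_ne_zero (pow_ne_zero 2 hd) (pow_ne_zero 2 hs))]
    ring
  -- assembly
  have hgoalL : ∑ i, ((∑ j, 2 * x i / (x i ^ 2 - x j ^ 2)) + (x i)⁻¹)
        * (k1 * (∑ j, 2 * x i / (x i ^ 2 - x j ^ 2)) + k2 * (x i)⁻¹)
      = ∑ i, (Q i + (x i)⁻¹) * (k1 * Q i + k2 * (x i)⁻¹) := by
    refine Finset.sum_congr rfl fun i _ => ?_
    simp only [hQdef, hbdef]
  rw [hgoalL]
  have hexp : ∑ i, (Q i + (x i)⁻¹) * (k1 * Q i + k2 * (x i)⁻¹)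
      = (∑ i, k1 * Q i ^ 2) + ((∑ i, (k1 + k2) * (Q i * (x i)⁻¹)) + ∑ i, k2 / x i ^ 2) := by
    simp only [← Finset.sum_add_distrib]
    exact Finset.sum_congr rfl fun i _ => by ring
  rw [hexp, ← Finset.mul_sum, ← Finset.mul_sum, hA, mul_zero, zero_add, hB, hC,
    Finset.mul_sum]
  have hfin : ∑ p ∈ univ.filter (fun p : ι × ι => p.1 < p.2),
        k1 * (2 / (x p.1 - x p.2) ^ 2 + 2 / (x p.1 + x p.2) ^ 2)
      = (∑ p ∈ univ.filter (fun p : ι × ι => p.1 < p.2), k1 * 2 / (x p.1 - x p.2) ^ 2)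
        + ∑ p ∈ univ.filter (fun p : ι × ι => p.1 < p.2), k1 * 2 / (x p.1 + x p.2) ^ 2 := by
    simp only [← Finset.sum_add_distrib]
    exact Finset.sum_congr rfl fun p _ => by ring
  rw [hfin, add_assoc]
open Finset in
lemma pairQ {ι : Type*} [Fintype ι] [LinearOrder ι] [DecidableEq ι] (x : ι → ℝ) (hx : ∀ i, 0 < x i)
    (hinj : ∀ i j : ι, i ≠ j → x i ≠ x j) (m : ι) :
    (∑ p ∈ univ.filter (fun p : ι × ι => p.1 < p.2),
        (x p.1 - x p.2)⁻¹ * ((if m = p.1 then (1:ℝ) else 0) - (if m = p.2 then 1 else 0)))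
      + ∑ p ∈ univ.filter (fun p : ι × ι => p.1 < p.2),
        (x p.1 + x p.2)⁻¹ * ((if m = p.1 then (1:ℝ) else 0) + (if m = p.2 then 1 else 0))
      = ∑ j, 2 * x m / (x m ^ 2 - x j ^ 2) := by
  set F : ι → ι → ℝ :=
    fun i j => if i = m then (x i - x j)⁻¹ + (x i + x j)⁻¹ else 0 with hF
  have hps := pair_split' F
  have h_lhs : (∑ p ∈ univ.filter (fun p : ι × ι => p.1 < p.2),
        (x p.1 - x p.2)⁻¹ * ((if m = p.1 then (1:ℝ) else 0) - (if m = p.2 then 1 else 0)))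
      + ∑ p ∈ univ.filter (fun p : ι × ι => p.1 < p.2),
        (x p.1 + x p.2)⁻¹ * ((if m = p.1 then (1:ℝ) else 0) + (if m = p.2 then 1 else 0))
      = ∑ p ∈ univ.filter (fun p : ι × ι => p.1 < p.2), (F p.1 p.2 + F p.2 p.1) := by
    rw [← Finset.sum_add_distrib]
    refine Finset.sum_congr rfl fun p hp => ?_
    have hne : p.1 ≠ p.2 := ne_of_lt (Finset.mem_filter.mp hp).2
    simp only [hF]
    by_cases h1 : m = p.1 <;> by_cases h2 : m = p.2
    · exact absurd (h1.symm.trans h2) hne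
    · rw [if_pos h1, if_neg h2, if_pos h1.symm, if_neg (fun hh => h2 hh.symm)]
      ring
    · rw [if_neg h1, if_pos h2, if_neg (fun hh => h1 hh.symm), if_pos h2.symm,
        show x p.2 - x p.1 = -(x p.1 - x p.2) by ring, inv_neg,
        show x p.2 + x p.1 = x p.1 + x p.2 by ring]
      ring
    · rw [if_neg h1, if_neg h2, if_neg (fun hh => h1 hh.symm), if_neg (fun hh => h2 hh.symm)]
      ring
  have h_diag : ∑ i : ι, F i i = (x m + x m)⁻¹ := by
    simp only [hF]
    rw [Finset.sum_ite_eq' univ m (fun i => (x i - x i)⁻¹ + (x i + x i)⁻¹)]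
    simp [sub_self]
  have h_double : ∑ i : ι, ∑ j : ι, F i j = ∑ j : ι, ((x m - x j)⁻¹ + (x m + x j)⁻¹) := by
    have h1 : ∀ i : ι, ∑ j : ι, F i j
        = if i = m then ∑ j : ι, ((x i - x j)⁻¹ + (x i + x j)⁻¹) else 0 := by
      intro i; simp only [hF]; rcases eq_or_ne i m with h | h <;> simp [h]
    rw [Finset.sum_congr rfl fun i _ => h1 i,
      Finset.sum_ite_eq' univ m (fun i => ∑ j : ι, ((x i - x j)⁻¹ + (x i + x j)⁻¹))]
    simp
  have h_fix : ∑ j : ι, ((x m - x j)⁻¹ + (x m + x j)⁻¹)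
      = (∑ j, 2 * x m / (x m ^ 2 - x j ^ 2)) + (x m + x m)⁻¹ := by
    have h1 : ∀ j : ι, (x m - x j)⁻¹ + (x m + x j)⁻¹
        = 2 * x m / (x m ^ 2 - x j ^ 2) + (if j = m then (x m + x m)⁻¹ else 0) := by
      intro j
      rcases eq_or_ne j m with h | h
      · subst h
        simp [sub_self]
      · have hd : x m - x j ≠ 0 := sub_ne_zero.mpr (hinj m j (Ne.symm h))
        have hs : x m + x j ≠ 0 := (add_pos (hx m) (hx j)).ne'
        have hsq : x m ^ 2 - x j ^ 2 ≠ 0 := by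
          intro h0
          exact mul_ne_zero hd hs (by linear_combination h0)
        rw [if_neg h, add_zero]
        field_simp
        ring
    rw [Finset.sum_congr rfl fun j _ => h1 j, Finset.sum_add_distrib,
      Finset.sum_ite_eq' univ m (fun _ => (x m + x m)⁻¹)]
    simp
  rw [h_lhs]
  rw [h_double, h_fix, h_diag] at hps
  linarith

/-- The standard basis vector `e_i` of `ℝ^d`. -/
noncomputable def eVec (d : ℕ) (i : Fin d) : EuclideanSpace ℝ (Fin d) :=
  EuclideanSpace.single i 1

open Finset in
theorem stmt_13 {d : ℕ} (hd : 1 < d) [DecidableEq (EuclideanSpace ℝ (Fin d))]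
    (k1 k2 : ℝ) (hk1 : 0 < k1) (hk2 : 0 < k2)
    (Rp1 Rp2 : Finset (EuclideanSpace ℝ (Fin d)))
    -- `Rp1 = {e_i - e_j : i < j} ∪ {e_i + e_j : i < j}`
    (hRp1 : Rp1 =
      ((Finset.univ.filter fun p : Fin d × Fin d => p.1 < p.2).image
        fun p => eVec d p.1 - eVec d p.2) ∪
      ((Finset.univ.filter fun p : Fin d × Fin d => p.1 < p.2).image
        fun p => eVec d p.1 + eVec d p.2))
    -- `Rp2 = {e_i : 1 ≤ i ≤ d}`
    (hRp2 : Rp2 = Finset.univ.image (eVec d))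
    -- the multiplicity `k` equals `k1` on `Rp1` and `k2` on `Rp2`
    (k : EuclideanSpace ℝ (Fin d) → ℝ)
    (hK1 : ∀ α ∈ Rp1, k α = k1) (hK2 : ∀ α ∈ Rp2, k α = k2)
    (x : EuclideanSpace ℝ (Fin d))
    (hmono : ∀ i j : Fin d, i < j → x j < x i) (hpos : ∀ i : Fin d, 0 < x i) :
    ∑ α ∈ Rp1 ∪ Rp2, k α * ‖α‖ ^ 2 / ⟪α, x⟫ ^ 2 =
      ∑ α ∈ Rp1 ∪ Rp2, ∑ β ∈ Rp1 ∪ Rp2, k β * ⟪α, β⟫ / (⟪α, x⟫ * ⟪β, x⟫) := by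
  subst hRp1
  subst hRp2
  set P : Finset (Fin d × Fin d) :=
    Finset.univ.filter (fun p : Fin d × Fin d => p.1 < p.2) with hPdef
  set S : Finset (EuclideanSpace ℝ (Fin d)) :=
    ((P.image fun p => eVec d p.1 - eVec d p.2) ∪ (P.image fun p => eVec d p.1 + eVec d p.2))
      ∪ Finset.univ.image (eVec d) with hSdef
  have hxne : ∀ i j : Fin d, i ≠ j → x i ≠ x j := by
    intro i j hij
    rcases lt_or_gt_of_ne hij with h | h
    · exact (hmono i j h).ne'
    · exact (hmono j i h).ne
  -- coordinate lemmas
  have eapp : ∀ i m : Fin d, (eVec d i) m = if m = i then (1:ℝ) else 0 :=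
    fun i m => EuclideanSpace.single_apply i 1 m
  have uapp : ∀ i j m : Fin d, (eVec d i - eVec d j) m
      = (if m = i then (1:ℝ) else 0) - (if m = j then 1 else 0) := by
    intro i j m
    show (eVec d i) m - (eVec d j) m = _
    rw [eapp, eapp]
  have vapp : ∀ i j m : Fin d, (eVec d i + eVec d j) m
      = (if m = i then (1:ℝ) else 0) + (if m = j then 1 else 0) := by
    intro i j m
    show (eVec d i) m + (eVec d j) m = _
    rw [eapp, eapp]
  have inner_e : ∀ (i : Fin d) (y : EuclideanSpace ℝ (Fin d)), ⟪eVec d i, y⟫ = y i := by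
    intro i y
    rw [eVec, EuclideanSpace.inner_single_left]
    simp
  have innerU : ∀ (i j : Fin d) (y : EuclideanSpace ℝ (Fin d)),
      ⟪eVec d i - eVec d j, y⟫ = y i - y j := by
    intro i j y
    rw [inner_sub_left, inner_e, inner_e]
  have innerV : ∀ (i j : Fin d) (y : EuclideanSpace ℝ (Fin d)),
      ⟪eVec d i + eVec d j, y⟫ = y i + y j := by
    intro i j y
    rw [inner_add_left, inner_e, inner_e]
  -- injectivity
  have injU : ∀ p ∈ P, ∀ q ∈ P,
      (eVec d p.1 - eVec d p.2 : EuclideanSpace ℝ (Fin d)) = eVec d q.1 - eVec d q.2 → p = q := by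
    intro p hp q hq h
    have hpl : p.1 < p.2 := (Finset.mem_filter.mp hp).2
    have h1 : p.1 = q.1 := by
      have hc : (eVec d p.1 - eVec d p.2) p.1 = (eVec d q.1 - eVec d q.2) p.1 := by rw [h]
      rw [uapp, uapp, if_pos rfl, if_neg (ne_of_lt hpl)] at hc
      by_contra hne
      rw [if_neg hne] at hc
      split_ifs at hc <;> norm_num at hc
    have h2 : p.2 = q.2 := by
      have hc : (eVec d p.1 - eVec d p.2) p.2 = (eVec d q.1 - eVec d q.2) p.2 := by rw [h]
      rw [uapp, uapp, if_neg (ne_of_lt hpl).symm, if_pos rfl] at hc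
      by_contra hne
      rw [if_neg hne] at hc
      split_ifs at hc <;> norm_num at hc
    exact Prod.ext_iff.mpr ⟨h1, h2⟩
  have injV : ∀ p ∈ P, ∀ q ∈ P,
      (eVec d p.1 + eVec d p.2 : EuclideanSpace ℝ (Fin d)) = eVec d q.1 + eVec d q.2 → p = q := by
    intro p hp q hq h
    have hpl : p.1 < p.2 := (Finset.mem_filter.mp hp).2
    have hql : q.1 < q.2 := (Finset.mem_filter.mp hq).2
    have key : ∀ m : Fin d, (if m = p.1 then (1:ℝ) else 0) + (if m = p.2 then 1 else 0)
        = (if m = q.1 then (1:ℝ) else 0) + (if m = q.2 then 1 else 0) := by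
      intro m
      have hc : (eVec d p.1 + eVec d p.2) m = (eVec d q.1 + eVec d q.2) m := by rw [h]
      rw [vapp, vapp] at hc
      exact hc
    have h11 : p.1 = q.1 ∨ p.1 = q.2 := by
      by_contra hcon
      push_neg at hcon
      have hk := key p.1
      rw [if_pos rfl, if_neg (ne_of_lt hpl), if_neg hcon.1, if_neg hcon.2] at hk
      norm_num at hk
    have h22 : p.2 = q.1 ∨ p.2 = q.2 := by
      by_contra hcon
      push_neg at hcon
      have hk := key p.2
      rw [if_neg (ne_of_lt hpl).symm, if_pos rfl, if_neg hcon.1, if_neg hcon.2] at hk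
      norm_num at hk
    rcases h11 with h11 | h11 <;> rcases h22 with h22 | h22
    · exact absurd (h11.trans h22.symm) (ne_of_lt hpl)
    · exact Prod.ext_iff.mpr ⟨h11, h22⟩
    · have hlt : q.2 < q.1 := by rw [← h11, ← h22]; exact hpl
      exact absurd hql (lt_asymm hlt)
    · exact absurd (h11.trans h22.symm) (ne_of_lt hpl)
  have injW : ∀ i ∈ (univ : Finset (Fin d)), ∀ j ∈ (univ : Finset (Fin d)),
      eVec d i = eVec d j → i = j := by
    intro i _ j _ h
    have hc : (eVec d i) i = (eVec d j) i := by rw [h]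
    rw [eapp, eapp, if_pos rfl] at hc
    by_contra hne
    rw [if_neg hne] at hc
    norm_num at hc
  -- disjointness
  have disjUV : Disjoint (P.image fun p => eVec d p.1 - eVec d p.2)
      (P.image fun p => eVec d p.1 + eVec d p.2) := by
    rw [Finset.disjoint_left]
    rintro a ha hb
    obtain ⟨p, hp, hpe⟩ := Finset.mem_image.mp ha
    obtain ⟨q, hq, hqe⟩ := Finset.mem_image.mp hb
    have hpl : p.1 < p.2 := (Finset.mem_filter.mp hp).2
    have h : (eVec d p.1 - eVec d p.2 : EuclideanSpace ℝ (Fin d))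
        = eVec d q.1 + eVec d q.2 := by rw [hpe, ← hqe]
    have hc : (eVec d p.1 - eVec d p.2) p.2 = (eVec d q.1 + eVec d q.2) p.2 := by rw [h]
    rw [uapp, vapp, if_neg (ne_of_lt hpl).symm, if_pos rfl] at hc
    split_ifs at hc <;> norm_num at hc
  have disjW : Disjoint
      ((P.image fun p => eVec d p.1 - eVec d p.2) ∪ (P.image fun p => eVec d p.1 + eVec d p.2))
      (Finset.univ.image (eVec d)) := by
    rw [Finset.disjoint_left]
    rintro a ha hb
    obtain ⟨i, _, hie⟩ := Finset.mem_image.mp hb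
    rcases Finset.mem_union.mp ha with h | h
    · obtain ⟨p, hp, hpe⟩ := Finset.mem_image.mp h
      have hpl : p.1 < p.2 := (Finset.mem_filter.mp hp).2
      have h' : (eVec d p.1 - eVec d p.2 : EuclideanSpace ℝ (Fin d)) = eVec d i := by
        rw [hpe, ← hie]
      have hc : (eVec d p.1 - eVec d p.2) p.2 = (eVec d i) p.2 := by rw [h']
      rw [uapp, eapp, if_neg (ne_of_lt hpl).symm, if_pos rfl] at hc
      split_ifs at hc <;> norm_num at hc
    · obtain ⟨p, hp, hpe⟩ := Finset.mem_image.mp h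
      have hpl : p.1 < p.2 := (Finset.mem_filter.mp hp).2
      have h' : (eVec d p.1 + eVec d p.2 : EuclideanSpace ℝ (Fin d)) = eVec d i := by
        rw [hpe, ← hie]
      have hc1 : (eVec d p.1 + eVec d p.2) p.1 = (eVec d i) p.1 := by rw [h']
      have hc2 : (eVec d p.1 + eVec d p.2) p.2 = (eVec d i) p.2 := by rw [h']
      rw [vapp, eapp, if_pos rfl, if_neg (ne_of_lt hpl)] at hc1
      rw [vapp, eapp, if_neg (ne_of_lt hpl).symm, if_pos rfl] at hc2
      have e1 : p.1 = i := by
        by_contra hne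
        rw [if_neg hne] at hc1
        norm_num at hc1
      have e2 : p.2 = i := by
        by_contra hne
        rw [if_neg hne] at hc2
        norm_num at hc2
      exact (ne_of_lt hpl) (e1.trans e2.symm)
  -- sum splitting
  have sum_split : ∀ f : EuclideanSpace ℝ (Fin d) → ℝ,
      ∑ α ∈ S, f α = (∑ p ∈ P, f (eVec d p.1 - eVec d p.2))
        + (∑ p ∈ P, f (eVec d p.1 + eVec d p.2)) + ∑ i, f (eVec d i) := by
    intro f
    rw [hSdef, Finset.sum_union disjW, Finset.sum_union disjUV,
      Finset.sum_image injU, Finset.sum_image injV, Finset.sum_image injW]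
  -- values of k
  have kU : ∀ p ∈ P, k (eVec d p.1 - eVec d p.2) = k1 := fun p hp =>
    hK1 _ (Finset.mem_union_left _ (Finset.mem_image_of_mem _ hp))
  have kV : ∀ p ∈ P, k (eVec d p.1 + eVec d p.2) = k1 := fun p hp =>
    hK1 _ (Finset.mem_union_right _ (Finset.mem_image_of_mem _ hp))
  have kW : ∀ i : Fin d, k (eVec d i) = k2 := fun i =>
    hK2 _ (Finset.mem_image_of_mem _ (Finset.mem_univ i))
  -- norms
  have nU : ∀ p ∈ P, ‖(eVec d p.1 - eVec d p.2 : EuclideanSpace ℝ (Fin d))‖ ^ 2 = 2 := by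
    intro p hp
    have hpl : p.1 < p.2 := (Finset.mem_filter.mp hp).2
    rw [← real_inner_self_eq_norm_sq, innerU, uapp, uapp, if_pos rfl, if_neg (ne_of_lt hpl),
      if_neg (ne_of_lt hpl).symm, if_pos rfl]
    norm_num
  have nV : ∀ p ∈ P, ‖(eVec d p.1 + eVec d p.2 : EuclideanSpace ℝ (Fin d))‖ ^ 2 = 2 := by
    intro p hp
    have hpl : p.1 < p.2 := (Finset.mem_filter.mp hp).2
    rw [← real_inner_self_eq_norm_sq, innerV, vapp, vapp, if_pos rfl, if_neg (ne_of_lt hpl),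
      if_neg (ne_of_lt hpl).symm, if_pos rfl]
    norm_num
  have nW : ∀ i : Fin d, ‖(eVec d i : EuclideanSpace ℝ (Fin d))‖ ^ 2 = 1 := by
    intro i
    rw [← real_inner_self_eq_norm_sq, inner_e, eapp, if_pos rfl]
  -- the left-hand side
  have hLHS : ∑ α ∈ S, k α * ‖α‖ ^ 2 / ⟪α, x⟫ ^ 2
      = ((∑ p ∈ P, k1 * 2 / (x p.1 - x p.2) ^ 2)
          + ∑ p ∈ P, k1 * 2 / (x p.1 + x p.2) ^ 2) + ∑ i, k2 / x i ^ 2 := by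
    rw [sum_split (fun α => k α * ‖α‖ ^ 2 / ⟪α, x⟫ ^ 2)]
    congr 1
    · congr 1
      · exact Finset.sum_congr rfl fun p hp => by rw [kU p hp, nU p hp, innerU]
      · exact Finset.sum_congr rfl fun p hp => by rw [kV p hp, nV p hp, innerV]
    · exact Finset.sum_congr rfl fun i _ => by rw [kW i, nW i, inner_e, mul_one]
  -- the two auxiliary vectors
  set hvec : EuclideanSpace ℝ (Fin d) := ∑ α ∈ S, (⟪α, x⟫)⁻¹ • α with hhvec
  set gvec : EuclideanSpace ℝ (Fin d) := ∑ β ∈ S, (k β * (⟪β, x⟫)⁻¹) • β with hgvec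
  have hRHS1 : ∑ α ∈ S, ∑ β ∈ S, k β * ⟪α, β⟫ / (⟪α, x⟫ * ⟪β, x⟫) = ⟪hvec, gvec⟫ := by
    rw [hhvec, sum_inner]
    refine Finset.sum_congr rfl fun α _ => ?_
    rw [real_inner_smul_left, hgvec, inner_sum, Finset.mul_sum]
    refine Finset.sum_congr rfl fun β _ => ?_
    rw [real_inner_smul_right]
    ring
  have hcoord : ⟪hvec, gvec⟫ = ∑ m, hvec m * gvec m := by
    rw [PiLp.inner_apply]
    simp [RCLike.inner_apply]
    exact Finset.sum_congr rfl fun m _ => mul_comm _ _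
  have hvec_m : ∀ m : Fin d, hvec m = (∑ j, 2 * x m / (x m ^ 2 - x j ^ 2)) + (x m)⁻¹ := by
    intro m
    have h0 : hvec m = ⟪eVec d m, hvec⟫ := (inner_e m hvec).symm
    rw [h0, hhvec, inner_sum]
    have h1 : ∀ α ∈ S, ⟪eVec d m, (⟪α, x⟫)⁻¹ • α⟫ = (⟪α, x⟫)⁻¹ * ⟪eVec d m, α⟫ :=
      fun α _ => real_inner_smul_right _ _ _
    rw [Finset.sum_congr rfl h1, sum_split (fun α => (⟪α, x⟫)⁻¹ * ⟪eVec d m, α⟫)]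
    have h2 : ∑ p ∈ P, (⟪eVec d p.1 - eVec d p.2, x⟫)⁻¹ * ⟪eVec d m, eVec d p.1 - eVec d p.2⟫
        = ∑ p ∈ P, (x p.1 - x p.2)⁻¹
            * ((if m = p.1 then (1:ℝ) else 0) - (if m = p.2 then 1 else 0)) := by
      refine Finset.sum_congr rfl fun p _ => ?_
      rw [innerU, inner_e, uapp]
    have h3 : ∑ p ∈ P, (⟪eVec d p.1 + eVec d p.2, x⟫)⁻¹ * ⟪eVec d m, eVec d p.1 + eVec d p.2⟫
        = ∑ p ∈ P, (x p.1 + x p.2)⁻¹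
            * ((if m = p.1 then (1:ℝ) else 0) + (if m = p.2 then 1 else 0)) := by
      refine Finset.sum_congr rfl fun p _ => ?_
      rw [innerV, inner_e, vapp]
    have h4 : ∑ i, (⟪eVec d i, x⟫)⁻¹ * ⟪eVec d m, eVec d i⟫ = (x m)⁻¹ := by
      have h5 : ∀ i : Fin d, (⟪eVec d i, x⟫)⁻¹ * ⟪eVec d m, eVec d i⟫
          = if m = i then (x i)⁻¹ else 0 := by
        intro i
        rw [inner_e, inner_e, eapp]
        split_ifs <;> ring
      rw [Finset.sum_congr rfl fun i _ => h5 i, Finset.sum_ite_eq univ m (fun i => (x i)⁻¹)]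
      simp
    rw [h2, h3, h4, hPdef]
    exact congrArg (fun t => t + (x m)⁻¹) (pairQ x hpos hxne m)
  have gvec_m : ∀ m : Fin d,
      gvec m = k1 * (∑ j, 2 * x m / (x m ^ 2 - x j ^ 2)) + k2 * (x m)⁻¹ := by
    intro m
    have h0 : gvec m = ⟪eVec d m, gvec⟫ := (inner_e m gvec).symm
    rw [h0, hgvec, inner_sum]
    have h1 : ∀ α ∈ S, ⟪eVec d m, (k α * (⟪α, x⟫)⁻¹) • α⟫
        = (k α * (⟪α, x⟫)⁻¹) * ⟪eVec d m, α⟫ := fun α _ => real_inner_smul_right _ _ _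
    rw [Finset.sum_congr rfl h1,
      sum_split (fun α => (k α * (⟪α, x⟫)⁻¹) * ⟪eVec d m, α⟫)]
    have h2 : ∑ p ∈ P, (k (eVec d p.1 - eVec d p.2) * (⟪eVec d p.1 - eVec d p.2, x⟫)⁻¹)
          * ⟪eVec d m, eVec d p.1 - eVec d p.2⟫
        = k1 * ∑ p ∈ P, (x p.1 - x p.2)⁻¹
            * ((if m = p.1 then (1:ℝ) else 0) - (if m = p.2 then 1 else 0)) := by
      rw [Finset.mul_sum]
      refine Finset.sum_congr rfl fun p hp => ?_
      rw [innerU, inner_e, uapp, kU p hp]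
      ring
    have h3 : ∑ p ∈ P, (k (eVec d p.1 + eVec d p.2) * (⟪eVec d p.1 + eVec d p.2, x⟫)⁻¹)
          * ⟪eVec d m, eVec d p.1 + eVec d p.2⟫
        = k1 * ∑ p ∈ P, (x p.1 + x p.2)⁻¹
            * ((if m = p.1 then (1:ℝ) else 0) + (if m = p.2 then 1 else 0)) := by
      rw [Finset.mul_sum]
      refine Finset.sum_congr rfl fun p hp => ?_
      rw [innerV, inner_e, vapp, kV p hp]
      ring
    have h4 : ∑ i, (k (eVec d i) * (⟪eVec d i, x⟫)⁻¹) * ⟪eVec d m, eVec d i⟫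
        = k2 * (x m)⁻¹ := by
      have h5 : ∀ i : Fin d, (k (eVec d i) * (⟪eVec d i, x⟫)⁻¹) * ⟪eVec d m, eVec d i⟫
          = if m = i then k2 * (x i)⁻¹ else 0 := by
        intro i
        rw [inner_e, inner_e, eapp, kW i]
        split_ifs <;> ring
      rw [Finset.sum_congr rfl fun i _ => h5 i,
        Finset.sum_ite_eq univ m (fun i => k2 * (x i)⁻¹)]
      simp
    rw [h2, h3, h4, ← mul_add, hPdef]
    exact congrArg (fun t => k1 * t + k2 * (x m)⁻¹) (pairQ x hpos hxne m)
  rw [hLHS, hRHS1, hcoord]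
  have hfin : ∑ m : Fin d, hvec m * gvec m
      = ∑ m : Fin d, ((∑ j, 2 * x m / (x m ^ 2 - x j ^ 2)) + (x m)⁻¹)
          * (k1 * (∑ j, 2 * x m / (x m ^ 2 - x j ^ 2)) + k2 * (x m)⁻¹) :=
    Finset.sum_congr rfl fun m _ => by rw [hvec_m m, gvec_m m]
  rw [hfin, hPdef]
  exact (core x hpos hxne k1 k2).symm
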